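/- Asynchronous Lyapunov coupling: suppose nonnegative sequences (E^k_t) for k = 1,…,K satisfy E^k_{t+1} ≤ (1 − (3/2)α_t)·E^k_t + (α_t/λ^k)²·C^k + (α_t/λ^k)·∑_{k'<k} C^{k,k'}·E^{k'}_t for all t, where α_t < 1, λ^k > 0, C^k ≥ 0, C^{k,k'} ≥ 0. Define weights w^K = 1 and w^k = 2∑_{k'>k} w^{k'} C^{k',k} (λ^{k'})^{−1} for k < K (assume all w^k > 0), and L_t = ∑_k w^k E^k_t. Then L_{t+1} ≤ (1 − α_t)·L_t + α_t²·∑_k w^k C^k (λ^k)^{−2}. -/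

import Mathlib

open Finset

/-- Uni-timescale Lyapunov analysis for asynchronously coupled learning modules:
the weighted Lyapunov function contracts at rate `1 − α_t` with an `α_t²` noise term. -/
theorem asynchronous_lyapunov_coupling
    (K : ℕ)
    (E : Fin (K + 1) → ℕ → ℝ) (hE : ∀ k τ, 0 ≤ E k τ)
    (α : ℕ → ℝ) (hα : ∀ τ, 0 < α τ ∧ α τ < 1)
    (lam : Fin (K + 1) → ℝ) (hlam : ∀ k, 0 < lam k)
    (C : Fin (K + 1) → ℝ) (hC : ∀ k, 0 ≤ C k)
    (Ccross : Fin (K + 1) → Fin (K + 1) → ℝ) (hCcross : ∀ k k', 0 ≤ Ccross k k')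
    (hrec : ∀ k τ, E k (τ + 1) ≤ (1 - (3 / 2) * α τ) * E k τ + (α τ / lam k) ^ 2 * C k +
      (α τ / lam k) * ∑ k' ∈ univ.filter (· < k), Ccross k k' * E k' τ)
    (w : Fin (K + 1) → ℝ) (hwpos : ∀ k, 0 < w k)
    (hwlast : w (Fin.last K) = 1)
    (hw : ∀ k, k ≠ Fin.last K →
      w k = 2 * ∑ k' ∈ univ.filter (k < ·), w k' * Ccross k' k / lam k') :
    ∀ τ, (∑ k, w k * E k (τ + 1)) ≤
      (1 - α τ) * (∑ k, w k * E k τ) + (α τ) ^ 2 * ∑ k, w k * C k / (lam k) ^ 2 := by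
  intro τ
  obtain ⟨hα0, hα1⟩ := hα τ
  have h1 : (∑ k, w k * E k (τ + 1)) ≤
      ∑ k, w k * ((1 - (3 / 2) * α τ) * E k τ + (α τ / lam k) ^ 2 * C k +
        (α τ / lam k) * ∑ k' ∈ univ.filter (· < k), Ccross k k' * E k' τ) :=
    Finset.sum_le_sum fun k _ => mul_le_mul_of_nonneg_left (hrec k τ) (hwpos k).le
  refine h1.trans ?_
  have hsplit : ∑ k, w k * ((1 - (3 / 2) * α τ) * E k τ + (α τ / lam k) ^ 2 * C k +
        (α τ / lam k) * ∑ k' ∈ univ.filter (· < k), Ccross k k' * E k' τ)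
      = (1 - (3 / 2) * α τ) * (∑ k, w k * E k τ)
        + (α τ) ^ 2 * (∑ k, w k * C k / (lam k) ^ 2)
        + ∑ k, w k * (α τ / lam k) * ∑ k' ∈ univ.filter (· < k), Ccross k k' * E k' τ := by
    rw [Finset.mul_sum, Finset.mul_sum, ← Finset.sum_add_distrib, ← Finset.sum_add_distrib]
    refine Finset.sum_congr rfl fun k _ => ?_
    have hk := (hlam k).ne'
    field_simp
  rw [hsplit]
  -- swap the double sum
  have hswap : ∑ k, w k * (α τ / lam k) * ∑ k' ∈ univ.filter (· < k), Ccross k k' * E k' τ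
      = ∑ k', (α τ * E k' τ) * ∑ k ∈ univ.filter (k' < ·), w k * Ccross k k' / lam k := by
    simp only [Finset.mul_sum]
    rw [Finset.sum_comm' (t' := univ) (s' := fun k' => univ.filter (k' < ·))]
    · refine Finset.sum_congr rfl fun k' _ => Finset.sum_congr rfl fun k _ => ?_
      have hk := (hlam k).ne'
      field_simp
    · intro x y
      simp [Finset.mem_filter]
  rw [hswap]
  have hT : ∀ k', (∑ k ∈ univ.filter (k' < ·), w k * Ccross k k' / lam k) ≤ w k' / 2 := by
    intro k'
    by_cases h : k' = Fin.last K
    · subst h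
      have : univ.filter (Fin.last K < ·) = (∅ : Finset (Fin (K + 1))) := by
        apply Finset.filter_false_of_mem
        intro x _
        exact not_lt.mpr (Fin.le_last x)
      rw [this]
      simp
      linarith [hwpos (Fin.last K)]
    · have := hw k' h
      linarith
  have h3 : ∑ k', (α τ * E k' τ) * ∑ k ∈ univ.filter (k' < ·), w k * Ccross k k' / lam k
      ≤ (α τ / 2) * ∑ k, w k * E k τ := by
    rw [Finset.mul_sum]
    refine Finset.sum_le_sum fun k' _ => ?_
    have h0 : 0 ≤ α τ * E k' τ := mul_nonneg hα0.le (hE k' τ)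
    have := mul_le_mul_of_nonneg_left (hT k') h0
    calc (α τ * E k' τ) * ∑ k ∈ univ.filter (k' < ·), w k * Ccross k k' / lam k
        ≤ (α τ * E k' τ) * (w k' / 2) := this
      _ = α τ / 2 * (w k' * E k' τ) := by ring
  have hnoise : 0 ≤ ∑ k, w k * C k / (lam k) ^ 2 :=
    Finset.sum_nonneg fun k _ =>
      div_nonneg (mul_nonneg (hwpos k).le (hC k)) (sq_nonneg _)
  nlinarith [h3]
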